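/- Integrally 𝒯_r-finite functions are q-holonomic (Theorem 7.2(a)): let f : ℤ^r → V and suppose that for each i ∈ {1,…,r} there exist k_i ∈ ℕ and polynomials a_{i,0},…,a_{i,k_i−1} ∈ R[u_1,…,u_r] such that for all n = (n_1,…,n_r) ∈ ℤ^r one has f(n + k_i e_i) + Σ_{j=0}^{k_i−1} a_{i,j}(q^{n_1},…,q^{n_r}) f(n + j e_i) = 0, where e_i denotes the i-th standard basis vector of ℤ^r (i.e., f is integrally 𝒯_r-finite: in each variable it satisfies a recurrence, monic in the highest shift, whose coefficients are polynomials in q^{n_1},…,q^{n_r}). Then f is q-holonomic. -/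

import Mathlib

open scoped BigOperators

noncomputable section

/-- The operator `M^α L^β` acting on functions `ℤ^r → V`:
`(M^α L^β f)(n) = q^(α·n) • f(n + β)`, where `q = X ∈ R = k(q) = RatFunc k`. -/
def shiftZ (k : Type) [Field k] {V : Type} [AddCommGroup V] [Module (RatFunc k) V]
    {r : ℕ} (α β : Fin r → ℕ) (f : (Fin r → ℤ) → V) : (Fin r → ℤ) → V :=
  fun n => ((RatFunc.X : RatFunc k) ^ (∑ i, (α i : ℤ) * n i)) • f (fun i => n i + (β i : ℤ))

/-- The subspace `F_m f` spanned by the `M^α L^β f` with `|α| + |β| ≤ m`. -/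
def FmZ (k : Type) [Field k] {V : Type} [AddCommGroup V] [Module (RatFunc k) V]
    {r : ℕ} (m : ℕ) (f : (Fin r → ℤ) → V) : Submodule (RatFunc k) ((Fin r → ℤ) → V) :=
  Submodule.span (RatFunc k)
    { g | ∃ α β : Fin r → ℕ, (∑ i, α i) + (∑ i, β i) ≤ m ∧ g = shiftZ k α β f }

/-- `f : ℤ^r → V` is q-holonomic if each `F_m f` is finite dimensional over `R = k(q)`
and there is a constant `C` with `dim_R F_m f ≤ C (m+1)^r` for all `m`. -/
def IsQHolonomicZ (k : Type) [Field k] {V : Type} [AddCommGroup V] [Module (RatFunc k) V]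
    {r : ℕ} (f : (Fin r → ℤ) → V) : Prop :=
  (∀ m : ℕ, FiniteDimensional (RatFunc k) (FmZ k m f)) ∧
  ∃ C : ℕ, ∀ m : ℕ, Module.finrank (RatFunc k) (FmZ k m f) ≤ C * (m + 1) ^ r

namespace QHolAux

variable {k : Type} [Field k] {V : Type} [AddCommGroup V] [Module (RatFunc k) V] {r : ℕ}

lemma qzpow_sum {ι : Type*} (s : Finset ι) (e : ι → ℤ) :
    (RatFunc.X : RatFunc k) ^ (∑ t ∈ s, e t) = ∏ t ∈ s, (RatFunc.X : RatFunc k) ^ e t := by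
  induction s using Finset.cons_induction with
  | empty => simp
  | cons a s h ih => rw [Finset.sum_cons, Finset.prod_cons, zpow_add₀ RatFunc.X_ne_zero, ih]

/-- One reduction step using the recurrence in direction `i`. -/
lemma step (f : (Fin r → ℤ) → V) (K : Fin r → ℕ)
    (a : Fin r → ℕ → MvPolynomial (Fin r) (RatFunc k))
    (ha : ∀ (i : Fin r) (n : Fin r → ℤ),
      f (fun t => n t + if t = i then (K i : ℤ) else 0) +
        ∑ j ∈ Finset.range (K i),
          (MvPolynomial.eval (fun t => (RatFunc.X : RatFunc k) ^ (n t)) (a i j)) •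
            f (fun t => n t + if t = i then (j : ℤ) else 0) = 0)
    (α β : Fin r → ℕ) (i : Fin r) (hi : K i ≤ β i)
    (β'' : Fin r → ℕ) (hβ'' : β'' = fun t => β t - if t = i then K i else 0) :
    shiftZ k α β f = ∑ j ∈ Finset.range (K i), ∑ γ ∈ (a i j).support,
      (-(MvPolynomial.coeff γ (a i j) *
        (RatFunc.X : RatFunc k) ^ (∑ t, (γ t : ℤ) * (β'' t : ℤ)))) •
        shiftZ k (fun t => α t + γ t)
          (fun t => β'' t + if t = i then j else 0) f := by
  funext n
  have hq0 : (RatFunc.X : RatFunc k) ≠ 0 := RatFunc.X_ne_zero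
  set q : RatFunc k := RatFunc.X with hqdef
  set m : Fin r → ℤ := fun t => n t + β'' t with hm
  have hfn : (fun t => n t + (β t : ℤ)) = fun t => m t + if t = i then (K i : ℤ) else 0 := by
    funext t
    by_cases h : t = i <;> simp only [hm, hβ'', h, if_true, if_false, if_pos, if_neg] <;> omega
  have hrec := ha i m
  have hf : f (fun t => m t + if t = i then (K i : ℤ) else 0) =
      -∑ j ∈ Finset.range (K i),
        (MvPolynomial.eval (fun t => q ^ (m t)) (a i j)) •
          f (fun t => m t + if t = i then (j : ℤ) else 0) :=
    eq_neg_of_add_eq_zero_left hrec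
  show q ^ (∑ t, (α t : ℤ) * n t) • f (fun t => n t + (β t : ℤ)) = _
  rw [hfn, hf, smul_neg, Finset.smul_sum]
  rw [Finset.sum_apply, ← Finset.sum_neg_distrib]
  apply Finset.sum_congr rfl
  intro j _
  rw [Finset.sum_apply]
  have hfj : ∀ γ : Fin r →₀ ℕ,
      shiftZ k (fun t => α t + γ t) (fun t => β'' t + if t = i then j else 0) f n =
      q ^ (∑ t, ((α t + γ t : ℕ) : ℤ) * n t) • f (fun t => m t + if t = i then (j : ℤ) else 0) := by
    intro γ
    have harg : (fun s => n s + ((β'' s + if s = i then j else 0 : ℕ) : ℤ)) =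
        fun s => m s + if s = i then (j : ℤ) else 0 := by
      funext s
      by_cases h : s = i <;> simp [hm, h] <;> push_cast <;> ring
    simp only [shiftZ, harg]
    rfl
  have key : ∀ γ ∈ (a i j).support,
      (-(MvPolynomial.coeff γ (a i j) * q ^ (∑ t, (γ t : ℤ) * (β'' t : ℤ)))) •
        shiftZ k (fun t => α t + γ t) (fun t => β'' t + if t = i then j else 0) f n =
      ((-(MvPolynomial.coeff γ (a i j) * q ^ (∑ t, (γ t : ℤ) * (β'' t : ℤ)))) *
        q ^ (∑ t, ((α t + γ t : ℕ) : ℤ) * n t)) •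
        f (fun t => m t + if t = i then (j : ℤ) else 0) := by
    intro γ _
    rw [hfj γ, smul_smul]
  simp only [Pi.smul_apply]
  rw [Finset.sum_congr rfl key, ← Finset.sum_smul, smul_smul, ← neg_smul]
  congr 1
  rw [MvPolynomial.eval_eq', Finset.mul_sum, ← Finset.sum_neg_distrib]
  apply Finset.sum_congr rfl
  intro γ _
  rw [neg_mul, neg_inj]
  have hprod : ∏ t, (q ^ m t) ^ γ t = q ^ (∑ t, m t * (γ t : ℤ)) := by
    rw [qzpow_sum]
    apply Finset.prod_congr rfl
    intro t _
    rw [← zpow_natCast (q ^ m t) (γ t), ← zpow_mul]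
  have hexp : (∑ t, (α t : ℤ) * n t) + (∑ t, m t * (γ t : ℤ)) =
      (∑ t, (γ t : ℤ) * (β'' t : ℤ)) + ∑ t, ((α t + γ t : ℕ) : ℤ) * n t := by
    rw [← Finset.sum_add_distrib, ← Finset.sum_add_distrib]
    apply Finset.sum_congr rfl
    intro t _
    simp only [hm]
    push_cast
    ring
  rw [hprod, mul_left_comm, ← zpow_add₀ hq0, hexp, zpow_add₀ hq0, ← mul_assoc]

end QHolAux

namespace QHolAux

variable {k : Type} [Field k] {V : Type} [AddCommGroup V] [Module (RatFunc k) V] {r : ℕ}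

/-- Generators with `β` bounded by `K` and `|α| ≤ N`. -/
def TSet (k : Type) [Field k] {V : Type} [AddCommGroup V] [Module (RatFunc k) V]
    {r : ℕ} (f : (Fin r → ℤ) → V) (K : Fin r → ℕ) (N : ℕ) : Set ((Fin r → ℤ) → V) :=
  { g | ∃ α' β' : Fin r → ℕ, (∀ i, β' i < K i) ∧ (∑ i, α' i) ≤ N ∧ g = shiftZ k α' β' f }

lemma TSet_mono (f : (Fin r → ℤ) → V) (K : Fin r → ℕ) {N N' : ℕ} (h : N ≤ N') :
    TSet k f K N ⊆ TSet k f K N' := by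
  rintro g ⟨α', β', h1, h2, rfl⟩
  exact ⟨α', β', h1, le_trans h2 h, rfl⟩

lemma reduce (f : (Fin r → ℤ) → V) (K : Fin r → ℕ)
    (a : Fin r → ℕ → MvPolynomial (Fin r) (RatFunc k))
    (ha : ∀ (i : Fin r) (n : Fin r → ℤ),
      f (fun t => n t + if t = i then (K i : ℤ) else 0) +
        ∑ j ∈ Finset.range (K i),
          (MvPolynomial.eval (fun t => (RatFunc.X : RatFunc k) ^ (n t)) (a i j)) •
            f (fun t => n t + if t = i then (j : ℤ) else 0) = 0)
    (hK : ∀ i, 1 ≤ K i) (D : ℕ)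
    (hD : ∀ i j, j < K i → (a i j).totalDegree ≤ D) :
    ∀ (e : ℕ) (α β : Fin r → ℕ), (∑ i, (β i - (K i - 1))) ≤ e →
    shiftZ k α β f ∈ Submodule.span (RatFunc k) (TSet k f K ((∑ i, α i) + D * e)) := by
  intro e
  induction e with
  | zero =>
    intro α β hβ
    apply Submodule.subset_span
    refine ⟨α, β, ?_, by simp, rfl⟩
    intro i
    have h0 : β i - (K i - 1) = 0 := by
      have h1 := Finset.single_le_sum (f := fun t => β t - (K t - 1))
        (fun t _ => Nat.zero_le _) (Finset.mem_univ i)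
      beta_reduce at h1
      omega
    have := hK i
    omega
  | succ e ih =>
    intro α β hβ
    by_cases hb : ∀ i, β i < K i
    · exact Submodule.subset_span ⟨α, β, hb, Nat.le_add_right _ _, rfl⟩
    · push_neg at hb
      obtain ⟨i, hi⟩ := hb
      rw [step f K a ha α β i hi (fun t => β t - if t = i then K i else 0) rfl]
      apply Submodule.sum_mem
      intro j hj
      apply Submodule.sum_mem
      intro γ hγ
      apply Submodule.smul_mem
      have hjlt := Finset.mem_range.mp hj
      have hexc : (∑ t, (((β t - if t = i then K i else 0) + if t = i then j else 0) -
          (K t - 1))) ≤ e := by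
        have hlt : (∑ t, (((β t - if t = i then K i else 0) + if t = i then j else 0) -
            (K t - 1))) < ∑ t, (β t - (K t - 1)) := by
          apply Finset.sum_lt_sum
          · intro t _
            by_cases h : t = i
            · subst h; simp only [eq_self_iff_true, if_true]; omega
            · simp [h]
          · refine ⟨i, Finset.mem_univ i, ?_⟩
            simp only [eq_self_iff_true, if_true]
            have := hK i
            omega
        omega
      have hmem := ih (fun t => α t + γ t)
        (fun t => (β t - if t = i then K i else 0) + if t = i then j else 0) hexc
      refine Submodule.span_mono (TSet_mono f K ?_) hmem
      have hγd : ∑ t, γ t ≤ D := by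
        have h1 : (∑ t, γ t) = γ.sum fun _ e => e :=
          (Finsupp.sum_fintype γ (fun _ e => e) (fun _ => rfl)).symm
        rw [h1]
        exact le_trans (MvPolynomial.le_totalDegree hγ) (hD i j hjlt)
      have h2 : (∑ t, (α t + γ t)) = (∑ t, α t) + ∑ t, γ t := Finset.sum_add_distrib
      have h3 : D * (e + 1) = D * e + D := by ring
      rw [h2, h3]
      omega

/-- The finite generating family. -/
def genFam (k : Type) [Field k] {V : Type} [AddCommGroup V] [Module (RatFunc k) V]
    {r : ℕ} (f : (Fin r → ℤ) → V) (K : Fin r → ℕ) (N : ℕ)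
    (p : (Fin r → Fin (N + 1)) × (∀ i : Fin r, Fin (K i))) : (Fin r → ℤ) → V :=
  shiftZ k (fun t => (p.1 t : ℕ)) (fun t => (p.2 t : ℕ)) f

lemma TSet_subset_range (f : (Fin r → ℤ) → V) (K : Fin r → ℕ) (N : ℕ) :
    TSet k f K N ⊆ Set.range (genFam k f K N) := by
  rintro g ⟨α', β', h1, h2, rfl⟩
  have hα : ∀ i, α' i < N + 1 := by
    intro i
    have h3 := Finset.single_le_sum (f := α') (fun t _ => Nat.zero_le _) (Finset.mem_univ i)
    omega
  exact ⟨⟨fun i => ⟨α' i, hα i⟩, fun i => ⟨β' i, h1 i⟩⟩, rfl⟩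

lemma card_genFam_index (K : Fin r → ℕ) (N : ℕ) :
    Fintype.card ((Fin r → Fin (N + 1)) × (∀ i : Fin r, Fin (K i))) =
      (N + 1) ^ r * ∏ i, K i := by
  simp only [Fintype.card_prod, Fintype.card_pi, Fintype.card_fin, Finset.prod_const,
    Finset.card_univ, Fintype.card_fin]

end QHolAux

/-- Theorem 7.2(a): if `f : ℤ^r → V` is integrally `𝒯_r`-finite, i.e. for each
`i ∈ {1,…,r}` there are `kᵢ ∈ ℕ` and polynomials `a_{i,0}, …, a_{i,kᵢ−1}` in
`r` variables over `k(q)` such that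
`f(n + kᵢ eᵢ) + Σ_{j<kᵢ} a_{i,j}(q^{n_1},…,q^{n_r}) • f(n + j eᵢ) = 0` for all `n`,
then `f` is q-holonomic. -/
theorem qholonomic_of_integrally_finite (k : Type) [Field k] [CharZero k] {V : Type}
    [AddCommGroup V] [Module (RatFunc k) V] {r : ℕ} (hr : 1 ≤ r)
    (f : (Fin r → ℤ) → V)
    (hrec : ∀ i : Fin r, ∃ (ki : ℕ) (a : ℕ → MvPolynomial (Fin r) (RatFunc k)),
      ∀ n : Fin r → ℤ,
        f (fun t => n t + if t = i then (ki : ℤ) else 0) +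
          ∑ j ∈ Finset.range ki,
            (MvPolynomial.eval (fun t => (RatFunc.X : RatFunc k) ^ (n t)) (a j)) •
              f (fun t => n t + if t = i then (j : ℤ) else 0) = 0) :
    IsQHolonomicZ k f := by
  classical
  choose K a ha using hrec
  by_cases hK : ∀ i, 1 ≤ K i
  · -- main case
    set D : ℕ := ∑ i, ∑ j ∈ Finset.range (K i), (a i j).totalDegree with hDdef
    have hDle : ∀ i j, j < K i → (a i j).totalDegree ≤ D := by
      intro i j hj
      have h2 := Finset.single_le_sum
        (f := fun i => ∑ j' ∈ Finset.range (K i), (a i j').totalDegree)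
        (fun t _ => Nat.zero_le _) (Finset.mem_univ i)
      beta_reduce at h2
      refine le_trans ?_ h2
      exact Finset.single_le_sum (f := fun j' => (a i j').totalDegree)
        (fun t _ => Nat.zero_le _) (Finset.mem_range.mpr hj)
    have hspan : ∀ m : ℕ, FmZ k m f ≤
        Submodule.span (RatFunc k) (QHolAux.TSet k f K ((D + 1) * m)) := by
      intro m
      rw [FmZ]
      apply Submodule.span_le.mpr
      rintro g ⟨α, β, hm, rfl⟩
      have hβm : (∑ i, (β i - (K i - 1))) ≤ m := by
        have h1 : (∑ i, (β i - (K i - 1))) ≤ ∑ i, β i :=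
          Finset.sum_le_sum fun i _ => Nat.sub_le _ _
        omega
      have hmem := QHolAux.reduce f K a ha hK D hDle m α β hβm
      refine Submodule.span_mono (QHolAux.TSet_mono f K ?_) hmem
      have hα : (∑ i, α i) ≤ m := le_trans (Nat.le_add_right _ _) hm
      calc (∑ i, α i) + D * m ≤ m + D * m := Nat.add_le_add_right hα _
        _ = (D + 1) * m := by ring
    have hle : ∀ m : ℕ, FmZ k m f ≤
        Submodule.span (RatFunc k)
          (Set.range (QHolAux.genFam k f K ((D + 1) * m))) :=
      fun m => le_trans (hspan m)
        (Submodule.span_mono (QHolAux.TSet_subset_range f K _))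
    have hfin : ∀ N : ℕ, FiniteDimensional (RatFunc k)
        (Submodule.span (RatFunc k) (Set.range (QHolAux.genFam k f K N))) :=
      fun N => FiniteDimensional.span_of_finite _ (Set.finite_range _)
    constructor
    · intro m
      haveI := hfin ((D + 1) * m)
      exact Submodule.finiteDimensional_of_le (hle m)
    · refine ⟨(∏ i, K i) * (D + 1) ^ r, fun m => ?_⟩
      haveI := hfin ((D + 1) * m)
      have h1 : Module.finrank (RatFunc k) (FmZ k m f) ≤
          Module.finrank (RatFunc k) (Submodule.span (RatFunc k)
            (Set.range (QHolAux.genFam k f K ((D + 1) * m)))) :=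
        Submodule.finrank_mono (hle m)
      have h2 := finrank_range_le_card (R := RatFunc k)
        (QHolAux.genFam k f K ((D + 1) * m))
      rw [QHolAux.card_genFam_index] at h2
      have h4 : (D + 1) * m + 1 ≤ (D + 1) * (m + 1) := by
        rw [Nat.mul_succ]
        exact Nat.add_le_add_left (Nat.succ_le_succ (Nat.zero_le D)) _
      have h3 : ((D + 1) * m + 1) ^ r * ∏ i, K i ≤
          (∏ i, K i) * (D + 1) ^ r * (m + 1) ^ r := by
        calc ((D + 1) * m + 1) ^ r * ∏ i, K i
            ≤ ((D + 1) * (m + 1)) ^ r * ∏ i, K i :=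
              Nat.mul_le_mul_right _ (Nat.pow_le_pow_left h4 r)
          _ = (∏ i, K i) * (D + 1) ^ r * (m + 1) ^ r := by rw [mul_pow]; ring
      exact le_trans h1 (le_trans h2 h3)
  · -- degenerate case : some K i = 0, hence f = 0
    push_neg at hK
    obtain ⟨i, hi⟩ := hK
    have hKi : K i = 0 := by omega
    have hf0 : ∀ n, f n = 0 := by
      intro n
      have h0 := ha i n
      rw [hKi] at h0
      simpa using h0
    have hbot : ∀ m : ℕ, FmZ k m f = ⊥ := by
      intro m
      rw [FmZ]
      apply Submodule.span_eq_bot.mpr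
      rintro g ⟨α, β, -, rfl⟩
      funext n
      simp [shiftZ, hf0]
    refine ⟨fun m => ?_, ⟨0, fun m => ?_⟩⟩
    · rw [hbot m]; infer_instance
    · rw [hbot m]; simp
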